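/- (Green's function on the Rindler horizon, d = 7.) Fix l > 0 and define G : (0,∞) → ℝ by G(χ) = e^{−3χ} · (3 + coth(χ)) / (8π² · l³ · sinh²(χ)). Then: (i) for all χ > 0, (d/dχ)(sinh⁴(χ) · G′(χ)) = 5 · sinh⁴(χ) · G(χ); (ii) G(χ) → 0 as χ → ∞; (iii) lim_{χ→0⁺} (8π²/3) · l³ · sinh⁴(χ) · G′(χ) = −1. -/

import Mathlib

open Real Filter

private lemma hasDerivAt_F_rindler (l : ℝ) (hl : 0 < l) (χ : ℝ) (hχ : 0 < χ) :
    HasDerivAt (fun x => Real.exp (-3 * x) * (3 + Real.cosh x / Real.sinh x) /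
      (8 * π ^ 2 * l ^ 3 * Real.sinh x ^ 2))
      (Real.exp (-3 * χ) * (-8 * Real.sinh χ ^ 2 - 9 * (Real.sinh χ * Real.cosh χ)
        - 3 * Real.cosh χ ^ 2) / (8 * π ^ 2 * l ^ 3 * Real.sinh χ ^ 4)) χ := by
  have hs : Real.sinh χ ≠ 0 := ne_of_gt (Real.sinh_pos_iff.2 hχ)
  have hπ : (π : ℝ) ≠ 0 := Real.pi_ne_zero
  have hl' : l ≠ 0 := ne_of_gt hl
  have h1 : HasDerivAt (fun x : ℝ => Real.exp (-3 * x)) (Real.exp (-3 * χ) * (-3 * 1)) χ :=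
    ((hasDerivAt_id χ).const_mul (-3)).exp
  have h2 : HasDerivAt (fun x : ℝ => 3 + Real.cosh x / Real.sinh x)
      ((Real.sinh χ * Real.sinh χ - Real.cosh χ * Real.cosh χ) / Real.sinh χ ^ 2) χ :=
    ((Real.hasDerivAt_cosh χ).div (Real.hasDerivAt_sinh χ) hs).const_add 3
  have hD : HasDerivAt (fun x : ℝ => 8 * π ^ 2 * l ^ 3 * Real.sinh x ^ 2)
      (8 * π ^ 2 * l ^ 3 * (2 * Real.sinh χ ^ 1 * Real.cosh χ)) χ :=
    ((Real.hasDerivAt_sinh χ).pow 2).const_mul (8 * π ^ 2 * l ^ 3)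
  have hD0 : 8 * π ^ 2 * l ^ 3 * Real.sinh χ ^ 2 ≠ 0 := by
    apply mul_ne_zero _ (pow_ne_zero _ hs)
    positivity
  have h := (h1.mul h2).div hD hD0
  refine h.congr_deriv ?_
  simp only [Pi.mul_apply]
  field_simp
  ring

private lemma hasDerivAt_H_rindler (χ : ℝ) :
    HasDerivAt (fun x => Real.exp (-3 * x) * (-8 * Real.sinh x ^ 2
        - 9 * (Real.sinh x * Real.cosh x) - 3 * Real.cosh x ^ 2))
      (Real.exp (-3 * χ) * (15 * Real.sinh χ ^ 2 + 5 * (Real.sinh χ * Real.cosh χ))) χ := by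
  have h1 : HasDerivAt (fun x : ℝ => Real.exp (-3 * x)) (Real.exp (-3 * χ) * (-3 * 1)) χ :=
    ((hasDerivAt_id χ).const_mul (-3)).exp
  have hs := Real.hasDerivAt_sinh χ
  have hc := Real.hasDerivAt_cosh χ
  have hP : HasDerivAt (fun x : ℝ => -8 * Real.sinh x ^ 2
      - 9 * (Real.sinh x * Real.cosh x) - 3 * Real.cosh x ^ 2)
      (-8 * (2 * Real.sinh χ ^ 1 * Real.cosh χ)
        - 9 * (Real.cosh χ * Real.cosh χ + Real.sinh χ * Real.sinh χ)
        - 3 * (2 * Real.cosh χ ^ 1 * Real.sinh χ)) χ :=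
    (((hs.pow 2).const_mul (-8)).sub ((hs.mul hc).const_mul 9)).sub ((hc.pow 2).const_mul 3)
  have h := h1.mul hP
  refine h.congr_deriv ?_
  ring

private lemma tendsto_sinh_atTop' : Tendsto Real.sinh atTop atTop := by
  have h : Tendsto (fun x : ℝ => (Real.exp x - 1) / 2) atTop atTop :=
    (tendsto_atTop_add_const_right atTop (-1 : ℝ) Real.tendsto_exp_atTop).atTop_div_const
      (by norm_num)
  apply tendsto_atTop_mono' _ _ h
  filter_upwards [eventually_ge_atTop (0 : ℝ)] with x hx
  rw [Real.sinh_eq]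
  have : Real.exp (-x) ≤ 1 := Real.exp_le_one_iff.2 (by linarith)
  linarith

/-- The Dirichlet Green's function of `D² - (d-2)/l²` on the Rindler horizon for `d = 7`:
`G(χ) = e^{-3χ}(3 + coth χ)/(8π² l³ sinh² χ)` satisfies the radial ODE
`(sinh⁴ χ · G')' = 5 sinh⁴ χ · G` for `χ > 0`, vanishes as `χ → ∞`, and has the
delta-function normalization `lim_{χ→0⁺} (8π²/3) l³ sinh⁴ χ · G'(χ) = -1`. -/
theorem greens_function_rindler_d7 (l : ℝ) (hl : 0 < l) (G : ℝ → ℝ)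
    (hG : ∀ χ : ℝ, G χ = Real.exp (-3 * χ) * (3 + Real.cosh χ / Real.sinh χ) /
      (8 * π ^ 2 * l ^ 3 * Real.sinh χ ^ 2)) :
    (∀ χ : ℝ, 0 < χ →
      deriv (fun x => Real.sinh x ^ 4 * deriv G x) χ = 5 * Real.sinh χ ^ 4 * G χ) ∧
    Tendsto G atTop (nhds 0) ∧
    Tendsto (fun χ => (8 * π ^ 2 / 3) * l ^ 3 * Real.sinh χ ^ 4 * deriv G χ)
      (nhdsWithin 0 (Set.Ioi 0)) (nhds (-1)) := by
  have hπ : (π : ℝ) ≠ 0 := Real.pi_ne_zero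
  have hl' : l ≠ 0 := ne_of_gt hl
  have hGF : G = fun x => Real.exp (-3 * x) * (3 + Real.cosh x / Real.sinh x) /
      (8 * π ^ 2 * l ^ 3 * Real.sinh x ^ 2) := funext hG
  have hderiv : ∀ χ : ℝ, 0 < χ → deriv G χ =
      Real.exp (-3 * χ) * (-8 * Real.sinh χ ^ 2 - 9 * (Real.sinh χ * Real.cosh χ)
        - 3 * Real.cosh χ ^ 2) / (8 * π ^ 2 * l ^ 3 * Real.sinh χ ^ 4) := by
    intro χ hχ
    rw [hGF]
    exact (hasDerivAt_F_rindler l hl χ hχ).deriv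
  refine ⟨?_, ?_, ?_⟩
  · intro χ hχ
    have hEq : (fun x => Real.sinh x ^ 4 * deriv G x) =ᶠ[nhds χ]
        (fun x => Real.exp (-3 * x) * (-8 * Real.sinh x ^ 2
          - 9 * (Real.sinh x * Real.cosh x) - 3 * Real.cosh x ^ 2) / (8 * π ^ 2 * l ^ 3)) := by
      filter_upwards [isOpen_Ioi.mem_nhds hχ] with x hx
      have hs : Real.sinh x ≠ 0 := ne_of_gt (Real.sinh_pos_iff.2 hx)
      rw [hderiv x hx]
      field_simp
    rw [hEq.deriv_eq, ((hasDerivAt_H_rindler χ).div_const (8 * π ^ 2 * l ^ 3)).deriv, hG χ]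
    have hs : Real.sinh χ ≠ 0 := ne_of_gt (Real.sinh_pos_iff.2 hχ)
    field_simp
    ring
  · rw [hGF]
    have h1 : Tendsto (fun x : ℝ => Real.exp (-3 * x)) atTop (nhds 0) := by
      have h3 : Tendsto (fun x : ℝ => (3 : ℝ) * x) atTop atTop :=
        tendsto_id.const_mul_atTop (by norm_num)
      have := Real.tendsto_exp_neg_atTop_nhds_zero.comp h3
      exact this.congr fun x => by simp [Function.comp, neg_mul]
    have hinv : Tendsto (fun x : ℝ => (Real.sinh x)⁻¹) atTop (nhds 0) :=
      tendsto_sinh_atTop'.inv_tendsto_atTop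
    have h2 : Tendsto (fun x : ℝ => 3 + Real.cosh x / Real.sinh x) atTop (nhds 4) := by
      have hexp : Tendsto (fun x : ℝ => Real.exp (-x)) atTop (nhds 0) :=
        Real.tendsto_exp_neg_atTop_nhds_zero
      have h4 : Tendsto (fun x : ℝ => 4 + Real.exp (-x) * (Real.sinh x)⁻¹) atTop (nhds 4) := by
        simpa using (hexp.mul hinv).const_add (4 : ℝ)
      refine Tendsto.congr' ?_ h4
      filter_upwards [eventually_gt_atTop (0 : ℝ)] with x hx
      have hs : Real.sinh x ≠ 0 := ne_of_gt (Real.sinh_pos_iff.2 hx)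
      have hcs : Real.cosh x = Real.sinh x + Real.exp (-x) := by
        have := Real.cosh_sub_sinh x; linarith
      rw [hcs]
      field_simp
      ring
    have h3 : Tendsto (fun x : ℝ => (8 * π ^ 2 * l ^ 3 * Real.sinh x ^ 2)⁻¹) atTop (nhds 0) := by
      apply Tendsto.inv_tendsto_atTop
      exact ((tendsto_pow_atTop (two_ne_zero)).comp tendsto_sinh_atTop').const_mul_atTop
        (by positivity)
    have h := (h1.mul h2).mul h3
    simp only [div_eq_mul_inv]
    simpa [div_eq_mul_inv] using h
  · have hEq : (fun χ => (8 * π ^ 2 / 3) * l ^ 3 * Real.sinh χ ^ 4 * deriv G χ)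
        =ᶠ[nhdsWithin 0 (Set.Ioi 0)]
        (fun x => Real.exp (-3 * x) * (-8 * Real.sinh x ^ 2
          - 9 * (Real.sinh x * Real.cosh x) - 3 * Real.cosh x ^ 2) / 3) := by
      filter_upwards [self_mem_nhdsWithin] with x hx
      have hs : Real.sinh x ≠ 0 := ne_of_gt (Real.sinh_pos_iff.2 hx)
      rw [hderiv x hx]
      field_simp
    rw [tendsto_congr' hEq]
    have hc : ContinuousAt (fun x => Real.exp (-3 * x) * (-8 * Real.sinh x ^ 2
        - 9 * (Real.sinh x * Real.cosh x) - 3 * Real.cosh x ^ 2) / 3) 0 := by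
      fun_prop
    have := hc.tendsto.mono_left (nhdsWithin_le_nhds (s := Set.Ioi (0:ℝ)))
    simpa [Real.sinh_zero, Real.cosh_zero] using this
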